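/- Let G be a group, n ≥ 3, E the set of idempotents of End F_n(G), and IG(E) the free idempotent generated monoid over E. Every element of the H-class of ē_{11} in IG(E) lies in the submonoid of IG(E) generated by the set {ē_{11} ē_{a,j} ē_{11} : a : {1,…,n} → G with a(1)=1, j ∈ {1,…,n}} ∪ {ē_{1j} ē_{a,1} : a : {1,…,n} → G with a(1)=1, j ∈ {1,…,n}}. -/

import Mathlib

/-- An endomorphism of the rank-`n` free left `G`-act `F_n(G) = G × Fin n`
(the formal symbols `g x_i` are the pairs `(g, i)`), where the action is
`h • (g, i) = (h * g, i)` and equivariance says `(h • x) a = h • (x a)`. -/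
structure ActEnd (G : Type*) [Group G] (n : ℕ) : Type _ where
  toFun : G × Fin n → G × Fin n
  equivariant : ∀ (h : G) (x : G × Fin n),
    toFun (h * x.1, x.2) = (h * (toFun x).1, (toFun x).2)

namespace ActEnd

variable {G : Type*} [Group G] {n : ℕ}

/-- Composition is written left-to-right: `x (a * b) = (x a) b`. -/
instance : Monoid (ActEnd G n) where
  mul a b := ⟨fun x => b.toFun (a.toFun x), by
    intro h x
    try dsimp only
    rw [a.equivariant h x, b.equivariant]⟩
  one := ⟨id, fun _ _ => rfl⟩
  mul_assoc _ _ _ := rfl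
  one_mul _ := rfl
  mul_one _ := rfl

@[simp] theorem mul_toFun (a b : ActEnd G n) (x : G × Fin n) :
    (a * b).toFun x = b.toFun (a.toFun x) := rfl

theorem ext' {a b : ActEnd G n} (h : a.toFun = b.toFun) : a = b := by
  cases a; cases b; cases h; rfl

/-- The rank of an endomorphism of `F_n(G)`: the number of indices `j` such
that `G x_j` meets the image. -/
noncomputable def rank (a : ActEnd G n) : ℕ :=
  Nat.card {j : Fin n // ∃ x, (a.toFun x).2 = j}

end ActEnd

namespace ActEnd

variable {G : Type*} [Group G] {n : ℕ}

/-- The rank-1 idempotent `e_{a,j}` given by `(g x_t) e_{a,j} = (g * a t * (a j)⁻¹) x_j`.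
Taking `a` constantly `1` gives `e_{1j}`, and also `j = 0` gives `e_{11}`
(indices `1, …, n` are realised as `Fin n`, with `1 ↦ 0`). -/
def eaj (a : Fin n → G) (j : Fin n) : ActEnd G n :=
  ⟨fun x => (x.1 * a x.2 * (a j)⁻¹, j), by intro h x; simp [mul_assoc]⟩

theorem eaj_idem (a : Fin n → G) (j : Fin n) : eaj a j * eaj a j = eaj a j := by
  apply ext'
  funext x
  simp [eaj, mul_assoc]

/-- The map `a_g : g' x_t ↦ (g' * g) x_1`. -/
def aMap (g : G) (h0 : 0 < n) : ActEnd G n :=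
  ⟨fun x => (x.1 * g, ⟨0, h0⟩), by intro h x; simp [mul_assoc]⟩

end ActEnd

/-- The principal left ideal `M a` of `a`. -/
def lIdeal {M : Type*} [Monoid M] (a : M) : Set M := Set.range fun m => m * a

/-- The principal right ideal `a M` of `a`. -/
def rIdeal {M : Type*} [Monoid M] (a : M) : Set M := Set.range fun m => a * m

/-- The `H`-class of `e`: all elements that are both `L`- and `R`-related to `e`. -/
def hClass {M : Type*} [Monoid M] (e : M) : Set M :=
  {a | lIdeal a = lIdeal e ∧ rIdeal a = rIdeal e}

/-- The defining relation of the free idempotent generated monoid `IG(E)`: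
`ē f̄ = (e f)‾` whenever `{e, f} ∩ {e f, f e} ≠ ∅`. -/
def igRel (M : Type*) [Monoid M] :
    FreeMonoid {e : M // e * e = e} → FreeMonoid {e : M // e * e = e} → Prop :=
  fun x y => ∃ e f g : {e : M // e * e = e},
    (e.1 * f.1 = e.1 ∨ e.1 * f.1 = f.1 ∨ f.1 * e.1 = e.1 ∨ f.1 * e.1 = f.1) ∧
    e.1 * f.1 = g.1 ∧
    x = FreeMonoid.of e * FreeMonoid.of f ∧ y = FreeMonoid.of g

/-- The free idempotent generated monoid over the biordered set of idempotents
of `M`: the presented monoid with generators `ē` for each idempotent `e` and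
relations `ē f̄ = (e f)‾` whenever `{e, f} ∩ {e f, f e} ≠ ∅`. -/
abbrev IG (M : Type*) [Monoid M] : Type _ := (conGen (igRel M)).Quotient

/-- The generator `ē` of `IG(E)` corresponding to the idempotent `e`. -/
def ebar {M : Type*} [Monoid M] (e : {e : M // e * e = e}) : IG M :=
  (conGen (igRel M)).mk' (FreeMonoid.of e)

/-- `ē_{a,j}` as an element of `IG(E)` for `E` the idempotents of `End F_n(G)`. -/
def igE {G : Type*} [Group G] {n : ℕ} (a : Fin n → G) (j : Fin n) : IG (ActEnd G n) :=
  ebar ⟨ActEnd.eaj a j, ActEnd.eaj_idem a j⟩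

/-- `ē_{11}` as an element of `IG(E)`. -/
def ig11 {G : Type*} [Group G] {n : ℕ} (h0 : 0 < n) : IG (ActEnd G n) :=
  igE (fun _ => (1 : G)) ⟨0, h0⟩

section Aux

namespace ActEnd

variable {G : Type*} [Group G] {n : ℕ}

theorem toFun_pair (f : ActEnd G n) (g : G) (t : Fin n) :
    f.toFun (g, t) = (g * (f.toFun (1, t)).1, (f.toFun (1, t)).2) := by
  have h := f.equivariant g (1, t)
  simpa using h

@[simp] theorem eaj_toFun (a : Fin n → G) (j : Fin n) (x : G × Fin n) :
    (eaj a j).toFun x = (x.1 * a x.2 * (a j)⁻¹, j) := rfl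

/-- Rank-1 idempotents with the same target index form a left-zero semigroup. -/
theorem eaj_mul_same_j (a b : Fin n → G) (j : Fin n) :
    eaj a j * eaj b j = eaj a j := by
  apply ext'; funext x
  simp [eaj]

/-- Rank-1 idempotents with the same kernel function form a right-zero semigroup. -/
theorem eaj_mul_same_a (a : Fin n → G) (j m : Fin n) :
    eaj a j * eaj a m = eaj a m := by
  apply ext'; funext x
  simp [eaj, mul_assoc]

/-- Group element data of an idempotent `f` at index `t`. -/
def dd (f : ActEnd G n) (t : Fin n) : G := (f.toFun (1, t)).1

/-- Index data of an idempotent `f` at index `t`. -/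
def mm (f : ActEnd G n) (t : Fin n) : Fin n := (f.toFun (1, t)).2

/-- The canonical `f`-invariant function, normalized at `t0`. -/
def bb (f : ActEnd G n) (t0 t : Fin n) : G := dd f t * (dd f t0)⁻¹

theorem bb_t0 (f : ActEnd G n) (t0 : Fin n) : bb f t0 t0 = 1 := mul_inv_cancel _

theorem toFun_one_eq (f : ActEnd G n) (t : Fin n) :
    f.toFun (1, t) = (dd f t, mm f t) := rfl

/-- An idempotent fixes its image points. -/
theorem idem_fix {f : ActEnd G n} (hf : f * f = f) (t : Fin n) :
    dd f (mm f t) = 1 ∧ mm f (mm f t) = mm f t := by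
  have h : (f * f).toFun (1, t) = f.toFun (1, t) := by rw [hf]
  rw [mul_toFun, toFun_one_eq, toFun_pair, toFun_one_eq] at h
  have hp := Prod.ext_iff.1 h
  have h1 : dd f t * dd f (mm f t) = dd f t := hp.1
  have h2 : mm f (mm f t) = mm f t := hp.2
  refine ⟨mul_left_cancel (a := dd f t) ?_, h2⟩
  rw [h1, mul_one]

/-- `f · e_{b,j} = e_{b,j}` for the `f`-invariant function `b`. -/
theorem mul_eaj_bb {f : ActEnd G n} (hf : f * f = f) (t0 j : Fin n) :
    f * eaj (bb f t0) j = eaj (bb f t0) j := by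
  apply ext'; funext x
  obtain ⟨g, t⟩ := x
  have hfix := (idem_fix hf t).1
  simp only [mul_toFun, eaj_toFun, toFun_pair f g t, toFun_one_eq]
  dsimp [bb]
  rw [hfix]
  simp [mul_assoc]

/-- `e_{b,j} · f = e_{b, m}` where `m = mm f j`, for the `f`-invariant `b`. -/
theorem eaj_bb_mul {f : ActEnd G n} (hf : f * f = f) (t0 j : Fin n) :
    eaj (bb f t0) j * f = eaj (bb f t0) (mm f j) := by
  apply ext'; funext x
  obtain ⟨g, t⟩ := x
  have hfix := (idem_fix hf j).1
  simp only [mul_toFun, eaj_toFun]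
  rw [toFun_pair f _ j, toFun_one_eq]
  dsimp [bb]
  rw [hfix]
  ext
  · dsimp; group
  · rfl

end ActEnd

end Aux

section IGAux

theorem ig_rel_mul {M : Type*} [Monoid M] {e f g : {e : M // e * e = e}}
    (hc : e.1 * f.1 = e.1 ∨ e.1 * f.1 = f.1 ∨ f.1 * e.1 = e.1 ∨ f.1 * e.1 = f.1)
    (hp : e.1 * f.1 = g.1) : ebar e * ebar f = ebar g := by
  have h1 : ebar e * ebar f
      = (conGen (igRel M)).mk' (FreeMonoid.of e * FreeMonoid.of f) := (map_mul _ _ _).symm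
  rw [h1]
  exact (Con.eq _).2 (ConGen.Rel.of _ _ ⟨e, f, g, hc, hp, rfl, rfl⟩)

variable {G : Type*} [Group G] {n : ℕ}

theorem igE_mul_same_j (a b : Fin n → G) (j : Fin n) :
    igE a j * igE b j = igE a j :=
  ig_rel_mul (Or.inl (ActEnd.eaj_mul_same_j a b j)) (ActEnd.eaj_mul_same_j a b j)

theorem igE_mul_same_a (a : Fin n → G) (j m : Fin n) :
    igE a j * igE a m = igE a m :=
  ig_rel_mul (Or.inr (Or.inl (ActEnd.eaj_mul_same_a a j m))) (ActEnd.eaj_mul_same_a a j m)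

/-- The key absorption step: `ē_{a,j} f̄ = ē_{a,j} ē_{b,m}` in `IG(E)`, where
`b` is the normalized `f`-invariant function of `f` and `m = mm f j`. -/
theorem igE_mul_ebar (a : Fin n → G) (t0 j : Fin n) (f : {e : ActEnd G n // e * e = e}) :
    igE a j * ebar f = igE a j * igE (ActEnd.bb f.1 t0) (ActEnd.mm f.1 j) := by
  have h1 : igE a j = igE a j * igE (ActEnd.bb f.1 t0) j := (igE_mul_same_j _ _ _).symm
  have h2 : igE (ActEnd.bb f.1 t0) j * ebar f
      = igE (ActEnd.bb f.1 t0) (ActEnd.mm f.1 j) :=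
    ig_rel_mul (Or.inr (Or.inr (Or.inl (ActEnd.mul_eaj_bb f.2 t0 j))))
      (ActEnd.eaj_bb_mul f.2 t0 j)
  calc igE a j * ebar f = igE a j * (igE (ActEnd.bb f.1 t0) j * ebar f) := by
        rw [← mul_assoc, ← h1]
    _ = _ := by rw [h2]

/-- Iterating the absorption step along a word of idempotents. -/
theorem keyChain (t0 : Fin n) (L : List {e : ActEnd G n // e * e = e}) :
    ∀ (a : Fin n → G) (j : Fin n),
    ∃ P : List ((Fin n → G) × Fin n), (∀ p ∈ P, p.1 t0 = 1) ∧
      igE a j * (L.map ebar).prod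
        = igE a j * (P.map fun p => igE p.1 p.2).prod := by
  induction L with
  | nil => exact fun a j => ⟨[], by simp, rfl⟩
  | cons f L ih =>
    intro a j
    obtain ⟨P, hP, hEq⟩ := ih (ActEnd.bb f.1 t0) (ActEnd.mm f.1 j)
    refine ⟨(ActEnd.bb f.1 t0, ActEnd.mm f.1 j) :: P, ?_, ?_⟩
    · intro p hp
      rcases List.mem_cons.1 hp with rfl | hp
      · exact ActEnd.bb_t0 f.1 t0
      · exact hP p hp
    · simp only [List.map_cons, List.prod_cons, ← mul_assoc, igE_mul_ebar a t0 j f]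
      rw [mul_assoc, mul_assoc, hEq]

end IGAux

section MainAux

variable {G : Type*} [Group G] {n : ℕ}

theorem mk'_ofList (l : List {e : ActEnd G n // e * e = e}) :
    (conGen (igRel (ActEnd G n))).mk' (FreeMonoid.ofList l) = (l.map ebar).prod := by
  induction l with
  | nil => exact map_one _
  | cons a l ih =>
    have : FreeMonoid.ofList (a :: l) = FreeMonoid.of a * FreeMonoid.ofList l := rfl
    rw [this, map_mul, ih]
    rfl

theorem telescope (h0 : 0 < n) (S : Set (IG (ActEnd G n)))
    (hS1 : ∀ (a : Fin n → G) (j : Fin n), a ⟨0, h0⟩ = 1 →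
      ig11 h0 * igE a j * ig11 h0 ∈ S)
    (hS2 : ∀ (a : Fin n → G) (j : Fin n), a ⟨0, h0⟩ = 1 →
      igE (fun _ => (1 : G)) j * igE a ⟨0, h0⟩ ∈ S) :
    ∀ P : List ((Fin n → G) × Fin n), (∀ p ∈ P, p.1 ⟨0, h0⟩ = 1) →
      ig11 h0 * (P.map fun p => igE p.1 p.2).prod * ig11 h0 ∈ Submonoid.closure S := by
  intro P
  induction P with
  | nil =>
    intro _
    have h1 : ig11 h0 * ig11 h0 = ig11 h0 :=
      igE_mul_same_j (fun _ => (1 : G)) (fun _ => (1 : G)) ⟨0, h0⟩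
    simp only [List.map_nil, List.prod_nil, mul_one]
    rw [h1]
    have := Submonoid.subset_closure (hS1 (fun _ => 1) ⟨0, h0⟩ rfl)
    rwa [show ig11 h0 * igE (fun _ => (1 : G)) ⟨0, h0⟩ * ig11 h0 = ig11 h0 by
      rw [show igE (fun _ => (1 : G)) ⟨0, h0⟩ = ig11 h0 from rfl, h1, h1]] at this
  | cons p tl ih =>
    obtain ⟨a, j⟩ := p
    cases tl with
    | nil =>
      intro hnorm
      simp only [List.map_cons, List.map_nil, List.prod_cons, List.prod_nil, mul_one]
      exact Submonoid.subset_closure (hS1 a j (hnorm _ (List.mem_singleton_self _)))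
    | cons q tl' =>
      intro hnorm
      obtain ⟨a', j'⟩ := q
      have ha : a ⟨0, h0⟩ = 1 := hnorm _ List.mem_cons_self
      have ha' : a' ⟨0, h0⟩ = 1 := hnorm _ (List.mem_cons_of_mem _ List.mem_cons_self)
      have ihm := ih (fun p hp => hnorm p (List.mem_cons_of_mem _ hp))
      -- the telescoping identity
      have key : ig11 h0 * ((((a, j) :: (a', j') :: tl').map fun p => igE p.1 p.2).prod) * ig11 h0
          = (ig11 h0 * igE a j * ig11 h0) * (igE (fun _ => (1 : G)) j * igE a' ⟨0, h0⟩) *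
            (ig11 h0 * (((a', j') :: tl').map fun p => igE p.1 p.2).prod * ig11 h0) := by
        simp only [List.map_cons, List.prod_cons]
        symm
        have e1 : ig11 h0 * igE (fun _ => (1 : G)) j = igE (fun _ => (1 : G)) j :=
          igE_mul_same_a (fun _ => (1 : G)) ⟨0, h0⟩ j
        have e2 : igE a' ⟨0, h0⟩ * ig11 h0 = igE a' ⟨0, h0⟩ :=
          igE_mul_same_j a' (fun _ => (1 : G)) ⟨0, h0⟩
        have e3 : igE a j * igE (fun _ => (1 : G)) j = igE a j := igE_mul_same_j _ _ _
        have e4 : igE a' ⟨0, h0⟩ * igE a' j' = igE a' j' := igE_mul_same_a _ _ _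
        calc (ig11 h0 * igE a j * ig11 h0) * (igE (fun _ => (1 : G)) j * igE a' ⟨0, h0⟩) *
              (ig11 h0 * (igE a' j' * (tl'.map fun p => igE p.1 p.2).prod) * ig11 h0)
            = ig11 h0 * igE a j * (ig11 h0 * igE (fun _ => (1 : G)) j) *
              (igE a' ⟨0, h0⟩ * ig11 h0) *
              (igE a' j' * (tl'.map fun p => igE p.1 p.2).prod) * ig11 h0 := by
              simp only [mul_assoc]
          _ = ig11 h0 * igE a j * igE (fun _ => (1 : G)) j * igE a' ⟨0, h0⟩ *
              (igE a' j' * (tl'.map fun p => igE p.1 p.2).prod) * ig11 h0 := by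
              rw [e1, e2]
          _ = ig11 h0 * (igE a j * (igE a' j' * (tl'.map fun p => igE p.1 p.2).prod)) *
              ig11 h0 := by
              rw [show ig11 h0 * igE a j * igE (fun _ => (1 : G)) j
                  = ig11 h0 * igE a j by rw [mul_assoc, e3]]
              rw [show ig11 h0 * igE a j * igE a' ⟨0, h0⟩ *
                    (igE a' j' * (tl'.map fun p => igE p.1 p.2).prod)
                  = ig11 h0 * igE a j *
                    (igE a' ⟨0, h0⟩ * (igE a' j' * (tl'.map fun p => igE p.1 p.2).prod)) by
                  simp only [mul_assoc]]
              rw [← mul_assoc (igE a' ⟨0, h0⟩), e4]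
              simp only [mul_assoc]
      rw [key]
      exact Submonoid.mul_mem _
        (Submonoid.mul_mem _ (Submonoid.subset_closure (hS1 a j ha))
          (Submonoid.subset_closure (hS2 a' j ha'))) ihm

end MainAux


/-- Every element of the `H`-class of `ē_{11}` in `IG(E)` lies in the
submonoid generated by the elements `ē_{11} ē_{a,j} ē_{11}` and
`ē_{1j} ē_{a,1}` (for `a : {1,…,n} → G` with `a 1 = 1` and `j ∈ {1,…,n}`). -/
theorem stmt11 {G : Type*} [Group G] {n : ℕ} (hn : 3 ≤ n) :
    ∀ w ∈ hClass (ig11 (G := G) (n := n) (by omega)),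
      w ∈ Submonoid.closure
        ({x | ∃ (a : Fin n → G) (j : Fin n), a ⟨0, by omega⟩ = 1 ∧
            x = ig11 (G := G) (n := n) (by omega) * igE a j * ig11 (G := G) (n := n) (by omega)} ∪
         {x | ∃ (a : Fin n → G) (j : Fin n), a ⟨0, by omega⟩ = 1 ∧
            x = igE (fun _ => (1 : G)) j * igE a ⟨0, by omega⟩}) := by
  have h0 : 0 < n := by omega
  intro w hw
  set ε : IG (ActEnd G n) := ig11 h0 with hε
  have hεε : ε * ε = ε :=
    igE_mul_same_j (fun _ => (1 : G)) (fun _ => (1 : G)) ⟨0, h0⟩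
  -- w = ε * w * ε
  obtain ⟨u, hu⟩ : w ∈ lIdeal ε := hw.1 ▸ ⟨1, one_mul w⟩
  obtain ⟨v, hv⟩ : w ∈ rIdeal ε := hw.2 ▸ ⟨1, mul_one w⟩
  have hwε : w * ε = w := by rw [← hu, mul_assoc, hεε]
  have hεw : ε * w = w := by rw [← hv, ← mul_assoc, hεε]
  -- a word representing w
  obtain ⟨x, hx⟩ := Con.mk'_surjective (c := conGen (igRel (ActEnd G n))) w
  have hxl : w = ((FreeMonoid.toList x).map ebar).prod := by
    rw [← hx, ← mk'_ofList, FreeMonoid.ofList_toList]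
  -- replace the word by a word of rank-1 idempotents
  obtain ⟨P, hPnorm, hPeq⟩ := keyChain (⟨0, h0⟩ : Fin n) (FreeMonoid.toList x)
    (fun _ => (1 : G)) ⟨0, h0⟩
  have hw' : w = ig11 h0 * (P.map fun p => igE p.1 p.2).prod * ig11 h0 := by
    have : igE (G := G) (fun _ => (1 : G)) (⟨0, h0⟩ : Fin n) = ig11 h0 := rfl
    rw [this] at hPeq
    calc w = ε * w * ε := by rw [hεw, hwε]
      _ = ig11 h0 * ((FreeMonoid.toList x).map ebar).prod * ig11 h0 := by
          rw [hε, ← hxl]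
      _ = ig11 h0 * (P.map fun p => igE p.1 p.2).prod * ig11 h0 := by
          rw [hPeq]
  rw [hw']
  refine telescope h0 _ ?_ ?_ P hPnorm
  · intro a j hanorm
    exact Or.inl ⟨a, j, hanorm, rfl⟩
  · intro a j hanorm
    exact Or.inr ⟨a, j, hanorm, rfl⟩
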